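/- Every free group is bi-orderable: for any set (type) α, the free group on α admits a strict linear order that is invariant under both left and right multiplication. -/

import Mathlib

noncomputable section
namespace MagnusAux

attribute [local instance] Classical.propDecidable

variable {α : Type*}

/-- Noncommutative formal power series over `ℤ` in variables `α`: coefficient functions. -/
abbrev S (α : Type*) := List α → ℤ

/-- Convolution product. -/
def conv (f g : S α) : S α := fun w =>
  ∑ i ∈ Finset.range (w.length + 1), f (w.take i) * g (w.drop i)

/-- The identity series. -/
def one_ : S α := fun w => if w = [] then 1 else 0

lemma conv_nil (f g : S α) : conv f g [] = f [] * g [] := by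
  simp [conv]

lemma conv_cons (f g : S α) (a : α) (t : List α) :
    conv f g (a :: t) = f [] * g (a :: t) +
      ∑ i ∈ Finset.range (t.length + 1), f (a :: t.take i) * g (t.drop i) := by
  rw [conv]
  simp only [List.length_cons]
  rw [Finset.sum_range_succ' (fun i => f ((a :: t).take i) * g ((a :: t).drop i))]
  simp [add_comm]

lemma conv_one (f : S α) : conv f one_ = f := by
  funext w
  rw [conv]
  rw [Finset.sum_eq_single w.length]
  · simp [one_]
  · intro i hi hne
    have : w.drop i ≠ [] := by
      intro h
      apply hne
      have h2 := List.drop_eq_nil_iff.mp h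
      simp at hi
      omega
    simp [one_, this]
  · intro h; simp at h

lemma one_conv (f : S α) : conv one_ f = f := by
  funext w
  rw [conv]
  rw [Finset.sum_eq_single 0]
  · simp [one_]
  · intro i hi hne
    have : w.take i ≠ [] := by
      intro h
      have h2 := List.take_eq_nil_iff.mp h
      rcases h2 with h2 | h2
      · exact hne h2
      · simp [h2] at hi hne; omega
    simp [one_, this]
  · intro h; simp at h

def shift (a : α) (f : S α) : S α := fun u => f (a :: u)

lemma conv_cons' (f g : S α) (a : α) (t : List α) :
    conv f g (a :: t) = f [] * g (a :: t) + conv (shift a f) g t := by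
  rw [conv_cons]; rfl

lemma conv_add_left (f f' g : S α) : conv (f + f') g = conv f g + conv f' g := by
  funext w
  simp [conv, add_mul, Finset.sum_add_distrib]

lemma conv_smul_left (c : ℤ) (f g : S α) :
    conv (fun u => c * f u) g = fun w => c * conv f g w := by
  funext w
  simp [conv, Finset.mul_sum, mul_assoc]

lemma conv_sub_right (f g h : S α) : conv f (g - h) = conv f g - conv f h := by
  funext w
  simp [conv, mul_sub, Finset.sum_sub_distrib]

lemma shift_conv (a : α) (f g : S α) :
    shift a (conv f g) = (fun u => f [] * shift a g u) + conv (shift a f) g := by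
  funext u
  simp only [Pi.add_apply, shift]
  rw [conv_cons']

lemma conv_assoc (f g h : S α) : conv (conv f g) h = conv f (conv g h) := by
  funext w
  induction w generalizing f with
  | nil => simp [conv_nil, mul_assoc]
  | cons a t ih =>
    rw [conv_cons' (conv f g) h, conv_cons' f (conv g h), shift_conv, conv_add_left,
      conv_nil]
    simp only [Pi.add_apply]
    have h1 := congrFun (conv_smul_left (f []) (shift a g) h) t
    rw [h1]
    have h2 : conv g h (a :: t) = g [] * h (a :: t) + conv (shift a g) h t := conv_cons' g h a t
    rw [h2, ih (shift a f)]
    ring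


/-- Recursive inverse of a series with constant coefficient 1. -/
def invF (f : S α) : List α → ℤ
  | [] => 1
  | a :: t => -∑ i ∈ Finset.range (t.length + 1), f (a :: t.take i) * invF f (t.drop i)
  termination_by w => w.length
  decreasing_by
    simp only [List.length_drop, List.length_cons]
    omega

lemma conv_invF (f : S α) (hf : f [] = 1) : conv f (invF f) = one_ := by
  funext w
  cases w with
  | nil => simp [conv_nil, one_, hf, invF]
  | cons a t =>
    rw [conv_cons, hf, one_mul]
    have : invF f (a :: t) = -∑ i ∈ Finset.range (t.length + 1),
        f (a :: t.take i) * invF f (t.drop i) := by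
      rw [invF]
    rw [this]
    simp [one_]

lemma invF_nil (f : S α) : invF f [] = 1 := by rw [invF]

/-- The group of series with constant coefficient 1. -/
def Gc (α : Type*) := {f : S α // f [] = 1}

instance : Mul (Gc α) := ⟨fun f g => ⟨conv f.1 g.1, by rw [conv_nil, f.2, g.2, one_mul]⟩⟩
instance : One (Gc α) := ⟨⟨one_, by simp [one_]⟩⟩
instance : Inv (Gc α) := ⟨fun f => ⟨invF f.1, invF_nil f.1⟩⟩

lemma Gc_mul_val (f g : Gc α) : (f * g).1 = conv f.1 g.1 := rfl
lemma Gc_one_val : (1 : Gc α).1 = one_ := rfl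
lemma Gc_inv_val (f : Gc α) : (f⁻¹).1 = invF f.1 := rfl

lemma Gc_mul_inv (f : Gc α) : f * f⁻¹ = 1 :=
  Subtype.ext (conv_invF f.1 f.2)

lemma Gc_mul_assoc (a b c : Gc α) : a * b * c = a * (b * c) :=
  Subtype.ext (conv_assoc a.1 b.1 c.1)
lemma Gc_one_mul (a : Gc α) : 1 * a = a := Subtype.ext (one_conv a.1)
lemma Gc_mul_one (a : Gc α) : a * 1 = a := Subtype.ext (conv_one a.1)

instance : Group (Gc α) where
  mul_assoc := Gc_mul_assoc
  one_mul := Gc_one_mul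
  mul_one := Gc_mul_one
  inv_mul_cancel a := by
    have h1 : a * a⁻¹ = 1 := Gc_mul_inv a
    have h2 : a⁻¹ * (a⁻¹)⁻¹ = 1 := Gc_mul_inv a⁻¹
    calc a⁻¹ * a = a⁻¹ * a * (a⁻¹ * (a⁻¹)⁻¹) := by rw [h2, Gc_mul_one]
    _ = a⁻¹ * (a * a⁻¹) * (a⁻¹)⁻¹ := by
        rw [Gc_mul_assoc, Gc_mul_assoc, Gc_mul_assoc]
    _ = 1 := by rw [h1, Gc_mul_one, h2]


/-- The Magnus generator `1 + X_a`. -/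
def gen (a : α) : Gc α := ⟨fun w => if w = [] ∨ w = [a] then 1 else 0, by simp⟩

lemma gen_val_nil (a : α) : (gen a).1 [] = 1 := by simp [gen]
lemma gen_val_single (a : α) : (gen a).1 [a] = 1 := by simp [gen]

/-- Coefficient at the one-letter word `[a]`, as a homomorphism to `Multiplicative ℤ`. -/
def coeff1 (a : α) : Gc α →* Multiplicative ℤ where
  toFun f := Multiplicative.ofAdd (f.1 [a])
  map_one' := by simp [Gc_one_val, one_]
  map_mul' f g := by
    have : (f * g).1 [a] = g.1 [a] + f.1 [a] := by
      rw [Gc_mul_val, conv]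
      simp only [List.length_cons, List.length_nil]
      rw [Finset.sum_range_succ, Finset.sum_range_one]
      simp [f.2, g.2]
    simp only [this]
    rw [← ofAdd_add, add_comm]

lemma gen_zpow_coeff (a : α) (e : ℤ) : ((gen a ^ e : Gc α)).1 [a] = e := by
  have := map_zpow (coeff1 a) (gen a) e
  have hg : coeff1 a (gen a) = Multiplicative.ofAdd (1 : ℤ) := by
    simp [coeff1, gen_val_single]
  rw [hg] at this
  have : Multiplicative.toAdd (coeff1 a (gen a ^ e)) =
      Multiplicative.toAdd ((Multiplicative.ofAdd (1 : ℤ)) ^ e) := by rw [this]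
  simpa [coeff1] using this

/-- Series supported on powers of the single letter `a` form a subgroup. -/
def repl (a : α) : Subgroup (Gc α) where
  carrier := {f | ∀ w, f.1 w ≠ 0 → w = List.replicate w.length a}
  one_mem' := by
    intro w hw
    rw [Gc_one_val, one_] at hw
    by_cases h : w = []
    · subst h; simp
    · simp [h] at hw
  mul_mem' := by
    intro f g hf hg w hw
    rw [Gc_mul_val, conv] at hw
    obtain ⟨i, hi, hterm⟩ := Finset.exists_ne_zero_of_sum_ne_zero hw
    rw [Finset.mem_range] at hi
    have h1 : f.1 (w.take i) ≠ 0 := fun h => hterm (by rw [h, zero_mul])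
    have h2 : g.1 (w.drop i) ≠ 0 := fun h => hterm (by rw [h, mul_zero])
    have e1 := hf _ h1
    have e2 := hg _ h2
    calc w = w.take i ++ w.drop i := (List.take_append_drop i w).symm
    _ = List.replicate ((w.take i).length) a ++ List.replicate ((w.drop i).length) a := by
        rw [← e1, ← e2]
    _ = List.replicate ((w.take i).length + (w.drop i).length) a := by
        rw [List.replicate_add]
    _ = List.replicate w.length a := by
        congr 1
        simp only [List.length_take, List.length_drop]
        omega
  inv_mem' := by
    intro f hf w
    rw [Gc_inv_val]
    suffices h : ∀ n (w : List α), w.length = n → invF f.1 w ≠ 0 →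
        w = List.replicate w.length a from h _ w rfl
    intro n
    induction n using Nat.strong_induction_on with
    | _ n ih =>
    intro w hn
    cases w with
    | nil => intro _; simp
    | cons b t =>
      rw [invF]
      intro hw
      rw [neg_ne_zero] at hw
      obtain ⟨i, hi, hterm⟩ := Finset.exists_ne_zero_of_sum_ne_zero hw
      have h1 : f.1 (b :: t.take i) ≠ 0 := fun h => hterm (by rw [h, zero_mul])
      have h2 : invF f.1 (t.drop i) ≠ 0 := fun h => hterm (by rw [h, mul_zero])
      have e1 := hf _ h1
      have e2 : t.drop i = List.replicate (t.drop i).length a := by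
        refine ih (t.drop i).length ?_ (t.drop i) rfl h2
        simp only [List.length_cons] at hn
        simp only [List.length_drop]
        omega
      have hb : b = a ∧ t.take i = List.replicate (t.take i).length a := by
        have : b :: t.take i = a :: List.replicate (t.take i).length a := by
          simpa [List.replicate_succ] using e1
        exact ⟨(List.cons.injEq _ _ _ _ ▸ this).1, (List.cons.injEq _ _ _ _ ▸ this).2⟩
      rw [Finset.mem_range] at hi
      have hlen : (t.take i).length + (t.drop i).length = t.length := by
        simp only [List.length_take, List.length_drop]
        omega
      have ht' : t = List.replicate t.length a := by
        conv_lhs => rw [← List.take_append_drop i t]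
        rw [hb.2, e2, ← List.replicate_add, hlen]
      rw [hb.1, List.length_cons, List.replicate_succ, ← ht']

lemma gen_mem_repl (a : α) : gen a ∈ repl a := by
  intro w hw
  simp only [gen] at hw
  by_cases h : w = []
  · subst h; simp
  · by_cases h2 : w = [a]
    · subst h2; simp
    · simp [h, h2] at hw

lemma gen_zpow_support (a : α) (e : ℤ) (w : List α) (hw : ((gen a ^ e : Gc α)).1 w ≠ 0) :
    w = List.replicate w.length a :=
  ((repl a).zpow_mem (gen_mem_repl a) e) w hw


/-- Product of Magnus blocks `(1+X_a)^e` over a syllable list. -/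
def prodBlocks (L : List (α × ℤ)) : Gc α :=
  (L.map fun p => gen p.1 ^ p.2).prod

lemma prodBlocks_nil : prodBlocks ([] : List (α × ℤ)) = 1 := by simp [prodBlocks]

lemma prodBlocks_cons (p : α × ℤ) (L : List (α × ℤ)) :
    prodBlocks (p :: L) = gen p.1 ^ p.2 * prodBlocks L := by simp [prodBlocks]

/-- Support lemma: products of blocks are supported on concatenations of replicates. -/
lemma prodBlocks_support (L : List (α × ℤ)) (w : List α)
    (hw : (prodBlocks L).1 w ≠ 0) :
    ∃ ms : List (ℕ × α), ms.length = L.length ∧ ms.map Prod.snd = L.map Prod.fst ∧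
      w = (ms.map fun q => List.replicate q.1 q.2).flatten := by
  induction L generalizing w with
  | nil =>
    rw [prodBlocks_nil, Gc_one_val, one_] at hw
    by_cases h : w = []
    · exact ⟨[], by simp [h]⟩
    · simp [h] at hw
  | cons p L ih =>
    rw [prodBlocks_cons, Gc_mul_val, conv] at hw
    obtain ⟨i, hi, hterm⟩ := Finset.exists_ne_zero_of_sum_ne_zero hw
    have h1 : (gen p.1 ^ p.2 : Gc α).1 (w.take i) ≠ 0 := fun h => hterm (by rw [h, zero_mul])
    have h2 : (prodBlocks L).1 (w.drop i) ≠ 0 := fun h => hterm (by rw [h, mul_zero])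
    have e1 := gen_zpow_support p.1 p.2 _ h1
    obtain ⟨ms, hlen, hsnd, hjoin⟩ := ih _ h2
    refine ⟨((w.take i).length, p.1) :: ms, by simp [hlen], by simp [hsnd], ?_⟩
    simp only [List.map_cons, List.flatten_cons]
    rw [← e1, ← hjoin, List.take_append_drop]

/-- A word with no two adjacent equal letters that is a concatenation of replicates
has length at most the number of blocks. -/
lemma chain_ne_flatten_length (ms : List (ℕ × α))
    (hch : List.Chain' (fun x y => x ≠ y) ((ms.map fun q => List.replicate q.1 q.2).flatten)) :
    ((ms.map fun q => List.replicate q.1 q.2).flatten).length ≤ ms.length := by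
  induction ms with
  | nil => simp
  | cons q ms ih =>
    simp only [List.map_cons, List.flatten_cons] at hch ⊢
    rw [List.Chain', List.isChain_append] at hch
    obtain ⟨hc1, hc2, _⟩ := hch
    have hq : q.1 ≤ 1 := by
      by_contra h
      push_neg at h
      obtain ⟨m, hm⟩ : ∃ m, q.1 = m + 2 := ⟨q.1 - 2, by omega⟩
      rw [hm] at hc1
      simp only [List.replicate_succ, List.isChain_cons_cons] at hc1
      exact hc1.1 rfl
    have := ih hc2
    simp only [List.length_append, List.length_replicate, List.length_cons]
    omega

/-- Value lemma: the coefficient of the syllable word in a product of blocks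
is the product of the exponents. -/
lemma prodBlocks_coeff (L : List (α × ℤ))
    (hch : List.Chain' (fun p q => p.1 ≠ q.1) L) :
    (prodBlocks L).1 (L.map Prod.fst) = (L.map Prod.snd).prod := by
  induction L with
  | nil => simp [prodBlocks_nil, Gc_one_val, one_]
  | cons p L ih =>
    have hch' : List.Chain' (fun p q : α × ℤ => p.1 ≠ q.1) L := hch.tail
    rw [prodBlocks_cons, Gc_mul_val, conv]
    simp only [List.map_cons, List.length_cons, List.length_map]
    rw [Finset.sum_eq_single 1]
    · simp only [List.take_succ_cons, List.take_zero, List.drop_succ_cons, List.drop_zero]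
      rw [gen_zpow_coeff, ih hch']
      simp
    · intro i hi hne
      rw [Finset.mem_range] at hi
      rcases Nat.eq_zero_or_pos i with h0 | hpos
      · subst h0
        simp only [List.take_zero, List.drop_zero]
        have hR : (prodBlocks L).1 (p.1 :: L.map Prod.fst) = 0 := by
          by_contra hR
          obtain ⟨ms, hlen, _, hjoin⟩ := prodBlocks_support L _ hR
          have hch2 : List.Chain' (fun x y => x ≠ y)
              ((ms.map fun q => List.replicate q.1 q.2).flatten) := by
            rw [← hjoin]
            exact List.isChain_map_of_isChain Prod.fst (fun _ _ h => h) hch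
          have := chain_ne_flatten_length ms hch2
          rw [← hjoin] at this
          simp only [List.length_cons, List.length_map] at this
          omega
        rw [hR, mul_zero]
      · -- i ≥ 2
        have hi2 : 2 ≤ i := by omega
        have hB : (gen p.1 ^ p.2 : Gc α).1 ((p.1 :: L.map Prod.fst).take i) = 0 := by
          by_contra hB
          have := gen_zpow_support p.1 p.2 _ hB
          -- take i of the word starts p.1 :: q.1 :: ... with p.1 ≠ q.1
          obtain ⟨q, L', rfl⟩ : ∃ q L', L = q :: L' := by
            cases L with
            | nil => simp at hi; omega
            | cons q L' => exact ⟨q, L', rfl⟩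
          have hne' : p.1 ≠ q.1 := (List.isChain_cons_cons.mp hch).1
          obtain ⟨j, hj⟩ : ∃ j, i = j + 2 := ⟨i - 2, by omega⟩
          subst hj
          simp only [List.map_cons, List.take_succ_cons, List.length_cons,
            List.length_take] at this
          rw [List.replicate_succ, List.replicate_succ] at this
          have := (List.cons.injEq _ _ _ _ ▸ this).2
          have := (List.cons.injEq _ _ _ _ ▸ this).1
          exact hne' this.symm
        rw [hB, zero_mul]
    · intro h
      simp only [Finset.mem_range] at h
      omega


def eps (b : Bool) : ℤ := if b then 1 else -1

lemma eps_ne_zero (b : Bool) : eps b ≠ 0 := by cases b <;> simp [eps]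

/-- Syllable decomposition: collapse consecutive letters with the same generator. -/
def sylls : List (α × Bool) → List (α × ℤ)
  | [] => []
  | (a, b) :: t =>
    match sylls t with
    | [] => [(a, eps b)]
    | (a', e) :: r => if a = a' then (a, e + eps b) :: r else (a, eps b) :: (a', e) :: r

lemma sylls_nil : sylls ([] : List (α × Bool)) = [] := rfl

lemma sylls_cons (a : α) (b : Bool) (t : List (α × Bool)) :
    sylls ((a, b) :: t) = match sylls t with
    | [] => [(a, eps b)]
    | (a', e) :: r => if a = a' then (a, e + eps b) :: r else (a, eps b) :: (a', e) :: r := by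
  rfl

def letter (x : α × Bool) : Gc α := cond x.2 (gen x.1) (gen x.1)⁻¹

lemma letter_eq (x : α × Bool) : letter x = gen x.1 ^ eps x.2 := by
  rcases x with ⟨a, b⟩
  cases b <;> simp [letter, eps, zpow_one]

/-- The reduced-word condition: adjacent letters with equal generator have equal sign. -/
def Rcond (p q : α × Bool) : Prop := p.1 = q.1 → p.2 = q.2

lemma sylls_spec (L : List (α × Bool)) (hch : List.Chain' Rcond L) :
    List.Chain' (fun p q : α × ℤ => p.1 ≠ q.1) (sylls L) ∧
    (∀ p ∈ sylls L, p.2 ≠ 0) ∧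
    (L.map letter).prod = prodBlocks (sylls L) ∧
    (∀ a b t, L = (a, b) :: t →
      ∃ c : ℤ, 1 ≤ c ∧ (sylls L).head? = some (a, eps b * c)) := by
  induction L with
  | nil =>
    refine ⟨by simp [sylls_nil, List.Chain'], by simp [sylls_nil], by simp [sylls_nil, prodBlocks_nil], ?_⟩
    intro a b t h; simp at h
  | cons x t ih =>
    obtain ⟨a, b⟩ := x
    obtain ⟨ih1, ih2, ih3, ih4⟩ := ih hch.tail
    have hprod : (((a, b) :: t).map letter).prod
        = gen a ^ eps b * prodBlocks (sylls t) := by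
      rw [List.map_cons, List.prod_cons, letter_eq, ih3]
    cases ht : sylls t with
    | nil =>
      have hs : sylls ((a, b) :: t) = [(a, eps b)] := by rw [sylls_cons, ht]
      refine ⟨by simp [hs, List.Chain'], by simp [hs, eps_ne_zero], ?_, ?_⟩
      · rw [hprod, ht, hs, prodBlocks_cons, prodBlocks_nil, mul_one]
      · intro a' b' t' heq
        injection heq with h1 h2
        injection h1 with h3 h4
        subst h3; subst h4
        exact ⟨1, le_refl 1, by simp [hs]⟩
    | cons q r =>
      obtain ⟨a', e⟩ := q
      -- t is nonempty
      obtain ⟨⟨a2, b2⟩, t', rfl⟩ : ∃ y t', t = y :: t' := by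
        cases t with
        | nil => rw [sylls_nil] at ht; exact absurd ht (by simp)
        | cons y t' => exact ⟨y, t', rfl⟩
      obtain ⟨c, hc1, hc2⟩ := ih4 a2 b2 t' rfl
      rw [ht] at hc2
      simp only [List.head?_cons, Option.some.injEq, Prod.mk.injEq] at hc2
      obtain ⟨heqa, he⟩ := hc2  -- a' = a2, e = eps b2 * c
      subst heqa
      by_cases haa : a = a'
      · -- merge case
        subst haa
        have hbb : b = b2 := (List.isChain_cons_cons.mp hch).1 rfl
        subst hbb
        have hs : sylls ((a, b) :: (a, b) :: t') = (a, e + eps b) :: r := by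
          rw [sylls_cons, ht]
          simp
        have hee : e + eps b = eps b * (c + 1) := by
          rw [he]
          cases b <;> simp [eps] <;> ring
        refine ⟨?_, ?_, ?_, ?_⟩
        · rw [hs]
          rw [ht] at ih1
          exact List.isChain_cons.mpr ⟨(List.isChain_cons.mp ih1).1, (List.isChain_cons.mp ih1).2⟩
        · rw [hs]
          intro p hp
          rcases List.mem_cons.mp hp with rfl | hp
          · simp only
            rw [hee]
            intro hcon
            rcases mul_eq_zero.mp hcon with h | h
            · exact eps_ne_zero b h
            · omega
          · exact ih2 p (by rw [ht]; exact List.mem_cons_of_mem _ hp)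
        · rw [hprod, ht, hs, prodBlocks_cons, prodBlocks_cons]
          rw [← mul_assoc, ← zpow_add, add_comm]
        · intro a3 b3 t3 heq
          injection heq with h1 h2
          injection h1 with h3 h4
          subst h3; subst h4
          refine ⟨c + 1, by omega, ?_⟩
          rw [hs, hee]
          rfl
      · -- new syllable case
        have hs : sylls ((a, b) :: (a', b2) :: t') = (a, eps b) :: (a', e) :: r := by
          rw [sylls_cons, ht]
          simp [haa]
        refine ⟨?_, ?_, ?_, ?_⟩
        · rw [hs]
          rw [ht] at ih1
          exact List.isChain_cons_cons.mpr ⟨haa, ih1⟩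
        · rw [hs]
          intro p hp
          rcases List.mem_cons.mp hp with rfl | hp
          · exact eps_ne_zero b
          · exact ih2 p (by rw [ht]; exact hp)
        · rw [hprod, ht, hs]
          simp only [prodBlocks_cons]
        · intro a3 b3 t3 heq
          injection heq with h1 h2
          injection h1 with h3 h4
          subst h3; subst h4
          exact ⟨1, le_refl 1, by rw [hs]; simp⟩


lemma not_chain'_decomp {β : Type*} (R : β → β → Prop) :
    ∀ (L : List β), ¬ List.Chain' R L →
      ∃ L₁ x y L₂, L = L₁ ++ x :: y :: L₂ ∧ ¬ R x y
  | [], h => absurd List.isChain_nil h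
  | [x], h => absurd (List.isChain_singleton x) h
  | x :: y :: t, h => by
    by_cases hxy : R x y
    · have : ¬ List.Chain' R (y :: t) := fun hc => h (List.isChain_cons_cons.mpr ⟨hxy, hc⟩)
      obtain ⟨L₁, x', y', L₂, heq, hr⟩ := not_chain'_decomp R (y :: t) this
      exact ⟨x :: L₁, x', y', L₂, by rw [heq, List.cons_append], hr⟩
    · exact ⟨[], x, y, t, rfl, hxy⟩

lemma toWord_chain (g : FreeGroup α) : List.Chain' Rcond g.toWord := by
  by_contra h
  obtain ⟨L₁, x, y, L₂, heq, hr⟩ := not_chain'_decomp Rcond g.toWord h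
  have hx : x.1 = y.1 ∧ x.2 ≠ y.2 := by
    by_cases h1 : x.1 = y.1
    · exact ⟨h1, fun h2 => hr (fun _ => h2)⟩
    · exact absurd (fun h2 => absurd h2 h1) hr
  obtain ⟨x1, x2⟩ := x
  obtain ⟨y1, y2⟩ := y
  obtain ⟨h1, h2⟩ := hx
  simp only at h1 h2
  subst h1
  have hy2 : y2 = !x2 := by
    cases x2 <;> cases y2 <;> simp_all
  subst hy2
  have hred := FreeGroup.reduce_toWord g
  rw [heq] at hred
  exact FreeGroup.reduce.not hred

/-- The Magnus homomorphism. -/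
def mu : FreeGroup α →* Gc α := FreeGroup.lift gen

lemma mu_ne_one (g : FreeGroup α) (hg : g ≠ 1) : mu g ≠ 1 := by
  have hL : g.toWord ≠ [] := fun h => hg (FreeGroup.toWord_eq_nil_iff.mp h)
  have hch := toWord_chain g
  have hmu : mu g = prodBlocks (sylls g.toWord) := by
    have h1 : mu g = FreeGroup.lift gen (FreeGroup.mk g.toWord) := by
      rw [FreeGroup.mk_toWord]; rfl
    rw [h1, FreeGroup.lift_mk]
    exact (sylls_spec g.toWord hch).2.2.1 ▸ rfl
  obtain ⟨⟨a, b⟩, t, hLt⟩ : ∃ x t, g.toWord = x :: t := by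
    cases hT : g.toWord with
    | nil => exact absurd hT hL
    | cons x t => exact ⟨x, t, rfl⟩
  obtain ⟨c, hc1, hc2⟩ := (sylls_spec g.toWord hch).2.2.2 a b t hLt
  have hs_ne : sylls g.toWord ≠ [] := by
    intro h; rw [h] at hc2; simp at hc2
  set SL := sylls g.toWord with hSL
  have hcoeff : (prodBlocks SL).1 (SL.map Prod.fst) = (SL.map Prod.snd).prod :=
    prodBlocks_coeff SL (sylls_spec g.toWord hch).1
  have hne : (SL.map Prod.snd).prod ≠ 0 := by
    apply List.prod_ne_zero
    intro h0
    obtain ⟨p, hp, hp0⟩ := List.mem_map.mp h0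
    exact (sylls_spec g.toWord hch).2.1 p hp hp0
  intro hone
  rw [hmu] at hone
  have hw_ne : SL.map Prod.fst ≠ [] := by
    intro h
    exact hs_ne (List.map_eq_nil_iff.mp h)
  have : (prodBlocks SL).1 (SL.map Prod.fst) = 0 := by
    rw [hone, Gc_one_val, one_, if_neg hw_ne]
  rw [hcoeff] at this
  exact hne this

lemma mu_injective : Function.Injective (mu : FreeGroup α → Gc α) := by
  intro g h hgh
  by_contra hne
  have : g * h⁻¹ ≠ 1 := fun hc => hne (by
    have := congrArg (· * h) hc
    simpa [mul_assoc] using this)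
  have := mu_ne_one (g * h⁻¹) this
  apply this
  rw [map_mul, map_inv, hgh, mul_inv_cancel]


/-- A well-order on words: first by length, then by an arbitrary well-ordering. -/
def ltW : List α → List α → Prop :=
  InvImage (Prod.Lex (· < ·) (WellOrderingRel : List α → List α → Prop))
    (fun w => (w.length, w))

lemma ltW_iff (v w : List α) : ltW v w ↔
    v.length < w.length ∨ (v.length = w.length ∧ WellOrderingRel v w) := by
  show Prod.Lex (· < ·) (WellOrderingRel : List α → List α → Prop)
    (v.length, v) (w.length, w) ↔ _
  rw [Prod.lex_def]

lemma ltW_wf : WellFounded (ltW (α := α)) :=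
  InvImage.wf _ ((Nat.lt_wfRel.wf).prod_lex
    ((WellOrderingRel.isWellOrder (α := List α)).toIsWellFounded.wf))

lemma ltW_of_length {v w : List α} (h : v.length < w.length) : ltW v w :=
  (ltW_iff v w).mpr (Or.inl h)

lemma ltW_trans {u v w : List α} (h1 : ltW u v) (h2 : ltW v w) : ltW u w := by
  rw [ltW_iff] at *
  rcases h1 with h1 | ⟨h1a, h1b⟩ <;> rcases h2 with h2 | ⟨h2a, h2b⟩
  · exact Or.inl (h1.trans h2)
  · exact Or.inl (h2a ▸ h1)
  · exact Or.inl (h1a ▸ h2)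
  · exact Or.inr ⟨h1a.trans h2a,
      _root_.trans_of (WellOrderingRel : List α → List α → Prop) h1b h2b⟩

lemma ltW_irrefl (w : List α) : ¬ ltW w w := by
  rw [ltW_iff]
  rintro (h | ⟨-, h⟩)
  · omega
  · exact irrefl_of (WellOrderingRel : List α → List α → Prop) w h

lemma ltW_trichot (v w : List α) : ltW v w ∨ v = w ∨ ltW w v := by
  rcases lt_trichotomy v.length w.length with h | h | h
  · exact Or.inl (ltW_of_length h)
  · rcases trichotomous_of (WellOrderingRel : List α → List α → Prop) v w with h2 | h2 | h2
    · exact Or.inl ((ltW_iff v w).mpr (Or.inr ⟨h, h2⟩))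
    · exact Or.inr (Or.inl h2)
    · exact Or.inr (Or.inr ((ltW_iff w v).mpr (Or.inr ⟨h.symm, h2⟩)))
  · exact Or.inr (Or.inr (ltW_of_length h))

lemma conv_sub_left (f g h : S α) : conv (f - g) h = conv f h - conv g h := by
  funext w
  simp [conv, sub_mul, Finset.sum_sub_distrib]

/-- The Magnus bi-order on the free group. -/
def rr (g h : FreeGroup α) : Prop :=
  ∃ w, (mu g).1 w < (mu h).1 w ∧ ∀ v, ltW v w → (mu g).1 v = (mu h).1 v

lemma key_left (f g h : Gc α) (w : List α)
    (hlt : ∀ v, ltW v w → g.1 v = h.1 v) :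
    ∀ v, (ltW v w ∨ v = w) → (f * h).1 v - (f * g).1 v = h.1 v - g.1 v := by
  intro v hv
  have hd : (f * h).1 v - (f * g).1 v = conv f.1 (h.1 - g.1) v := by
    rw [conv_sub_right]
    simp [Gc_mul_val]
  rw [hd, conv]
  rw [Finset.sum_eq_single 0]
  · simp [f.2]
  · intro i hi hne
    rw [Finset.mem_range] at hi
    have hvw : v.length ≤ w.length := by
      rcases hv with hv | rfl
      · rw [ltW_iff] at hv
        rcases hv with hv | ⟨hv, -⟩ <;> omega
      · omega
    have hdrop : ltW (v.drop i) w := by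
      apply ltW_of_length
      simp only [List.length_drop]
      omega
    have := hlt _ hdrop
    simp only [Pi.sub_apply, this, sub_self, mul_zero]
  · intro h0
    simp at h0

lemma key_right (f g h : Gc α) (w : List α)
    (hlt : ∀ v, ltW v w → g.1 v = h.1 v) :
    ∀ v, (ltW v w ∨ v = w) → (h * f).1 v - (g * f).1 v = h.1 v - g.1 v := by
  intro v hv
  have hd : (h * f).1 v - (g * f).1 v = conv (h.1 - g.1) f.1 v := by
    rw [conv_sub_left]
    simp [Gc_mul_val]
  rw [hd, conv]
  rw [Finset.sum_eq_single v.length]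
  · simp only [List.take_length, List.drop_length, f.2, mul_one, Pi.sub_apply]
  · intro i hi hne
    rw [Finset.mem_range] at hi
    have hvw : v.length ≤ w.length := by
      rcases hv with hv | rfl
      · rw [ltW_iff] at hv
        rcases hv with hv | ⟨hv, -⟩ <;> omega
      · omega
    have htake : ltW (v.take i) w := by
      apply ltW_of_length
      simp only [List.length_take]
      omega
    have := hlt _ htake
    simp only [Pi.sub_apply, this, sub_self, zero_mul]
  · intro h0
    simp at h0

lemma rr_mul_left (f g h : FreeGroup α) (hgh : rr g h) : rr (f * g) (f * h) := by
  obtain ⟨w, hw, hlt⟩ := hgh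
  refine ⟨w, ?_, ?_⟩
  · have := key_left (mu f) (mu g) (mu h) w hlt w (Or.inr rfl)
    rw [← map_mul, ← map_mul] at this
    omega
  · intro v hv
    have := key_left (mu f) (mu g) (mu h) w hlt v (Or.inl hv)
    rw [← map_mul, ← map_mul] at this
    have h2 := hlt v hv
    omega

lemma rr_mul_right (f g h : FreeGroup α) (hgh : rr g h) : rr (g * f) (h * f) := by
  obtain ⟨w, hw, hlt⟩ := hgh
  refine ⟨w, ?_, ?_⟩
  · have := key_right (mu f) (mu g) (mu h) w hlt w (Or.inr rfl)
    rw [← map_mul, ← map_mul] at this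
    omega
  · intro v hv
    have := key_right (mu f) (mu g) (mu h) w hlt v (Or.inl hv)
    rw [← map_mul, ← map_mul] at this
    have h2 := hlt v hv
    omega

lemma rr_irrefl (g : FreeGroup α) : ¬ rr g g := by
  rintro ⟨w, hw, -⟩
  omega

lemma rr_trans (g h k : FreeGroup α) (h1 : rr g h) (h2 : rr h k) : rr g k := by
  obtain ⟨w1, hw1, hlt1⟩ := h1
  obtain ⟨w2, hw2, hlt2⟩ := h2
  rcases ltW_trichot w1 w2 with hc | rfl | hc
  · exact ⟨w1, by have := hlt2 w1 hc; omega,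
      fun v hv => (hlt1 v hv).trans (hlt2 v (ltW_trans hv hc))⟩
  · exact ⟨w1, by omega, fun v hv => (hlt1 v hv).trans (hlt2 v hv)⟩
  · exact ⟨w2, by have := hlt1 w2 hc; omega,
      fun v hv => (hlt1 v (ltW_trans hv hc)).trans (hlt2 v hv)⟩

lemma rr_trichot (g h : FreeGroup α) : rr g h ∨ g = h ∨ rr h g := by
  by_cases hgh : g = h
  · exact Or.inr (Or.inl hgh)
  have hmu : mu g ≠ mu h := fun hc => hgh (mu_injective hc)
  have hfun : (mu g).1 ≠ (mu h).1 := fun hc => hmu (Subtype.ext hc)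
  have hD : ∃ v, (mu g).1 v ≠ (mu h).1 v := Function.ne_iff.mp hfun
  set D := {v : List α | (mu g).1 v ≠ (mu h).1 v} with hDdef
  have hDne : D.Nonempty := hD
  set w0 := (ltW_wf).min D hDne with hw0
  have hmem : w0 ∈ D := (ltW_wf).min_mem D hDne
  have hminimal : ∀ v, ltW v w0 → (mu g).1 v = (mu h).1 v := by
    intro v hv
    by_contra hne
    exact (ltW_wf).not_lt_min D hne hv
  rcases lt_or_gt_of_ne hmem with hlt | hgt
  · exact Or.inl ⟨w0, hlt, hminimal⟩
  · exact Or.inr (Or.inr ⟨w0, hgt, fun v hv => (hminimal v hv).symm⟩)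

end MagnusAux

end

/-- A group is bi-orderable if it admits a strict linear order invariant under
both left and right multiplication. -/
def BiOrderable (G : Type*) [Group G] : Prop :=
  ∃ r : G → G → Prop, IsStrictTotalOrder G r ∧
    (∀ f g h : G, r g h → r (f * g) (f * h)) ∧
    (∀ f g h : G, r g h → r (g * f) (h * f))

/-- Every free group is bi-orderable. -/
theorem freeGroup_biOrderable (α : Type*) : BiOrderable (FreeGroup α) := by
  refine ⟨MagnusAux.rr, ?_, MagnusAux.rr_mul_left, MagnusAux.rr_mul_right⟩
  exact { trichotomous := fun a b h1 h2 => ((MagnusAux.rr_trichot a b).resolve_left h1).resolve_right h2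
          irrefl := MagnusAux.rr_irrefl
          trans := MagnusAux.rr_trans }
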